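/- Let λ > 0 and m ∈ (-1,1). The function g(w) = (1-w)^{-2 - 2/λ} exp( -2(1-m)/(λ(1-w)) ) is differentiable on (0,1) and satisfies on (0,1) the stationary Fokker-Planck equation (λ/2) d/dw [ (1-w)² g(w) ] + (w - m) g(w) = 0. -/

import Mathlib

open Set

/-- The stationary solution for `D(|w|) = 1 - |w|` on `(0,1)`: the explicit
density `g` is differentiable on `(0,1)` and solves
`(λ/2) d/dw[(1-w)² g] + (w-m) g = 0` there. -/
theorem stationary_solution_linear_diffusion
    (l m : ℝ) (hl : 0 < l) (hm : m ∈ Ioo (-1:ℝ) 1)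
    (g : ℝ → ℝ)
    (hg : ∀ w, g w =
      (1 - w) ^ (-2 - 2/l) * Real.exp (-2*(1 - m) / (l * (1 - w)))) :
    DifferentiableOn ℝ g (Ioo (0:ℝ) 1) ∧
      ∀ w ∈ Ioo (0:ℝ) 1,
        HasDerivAt (fun w => (l/2) * ((1 - w)^2 * g w)) (-((w - m) * g w)) w := by
  have hgfun : g = fun w => (1 - w) ^ (-2 - 2/l) *
      Real.exp (-2*(1 - m) / (l * (1 - w))) := funext hg
  -- derivative of g at points of (0,1)
  have key : ∀ w ∈ Ioo (0:ℝ) 1, ∃ g', HasDerivAt g g' w ∧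
      HasDerivAt (fun w => (l/2) * ((1 - w)^2 * g w)) (-((w - m) * g w)) w := by
    intro w hw
    have hu : (0:ℝ) < 1 - w := by linarith [hw.2]
    have hune : (1:ℝ) - w ≠ 0 := ne_of_gt hu
    have h1 : HasDerivAt (fun w : ℝ => 1 - w) (-1) w := by
      simpa using (hasDerivAt_id w).const_sub 1
    have hB : HasDerivAt (fun w : ℝ => (1 - w) ^ (-2 - 2/l))
        ((-1) * (-2 - 2/l) * (1 - w) ^ (-2 - 2/l - 1)) w :=
      h1.rpow_const (Or.inl hune)
    have hden : HasDerivAt (fun w : ℝ => l * (1 - w)) (l * (-1)) w :=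
      h1.const_mul l
    have hdne : l * (1 - w) ≠ 0 := mul_ne_zero (ne_of_gt hl) hune
    have hE : HasDerivAt (fun w : ℝ => -2*(1 - m) / (l * (1 - w)))
        ((0 * (l * (1 - w)) - (-2*(1 - m)) * (l * (-1))) / (l * (1 - w))^2) w :=
      (hasDerivAt_const w (-2*(1 - m))).div hden hdne
    have hC := hE.exp
    have hBC : HasDerivAt (fun w : ℝ => (1 - w) ^ (-2 - 2/l) *
        Real.exp (-2*(1 - m) / (l * (1 - w)))) _ w := hB.mul hC
    rw [← hgfun] at hBC
    refine ⟨_, hBC, ?_⟩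
    have hA : HasDerivAt (fun w : ℝ => (1 - w)^2)
        ((2:ℕ) * (1 - w) ^ (2 - 1) * (-1)) w := h1.pow 2
    have htot : HasDerivAt (fun w => (l/2) * ((1 - w)^2 * g w)) _ w :=
      (hA.mul hBC).const_mul (l/2)
    convert htot using 1
    rw [hg]
    have hrw : (1 - w) ^ (-2 - 2/l - 1) = (1 - w) ^ (-2 - 2/l) / (1 - w) := by
      rw [Real.rpow_sub hu, Real.rpow_one]
    rw [hrw]
    set X := (1 - w) ^ (-2 - 2/l) with hX
    set Y := Real.exp (-2*(1 - m) / (l * (1 - w))) with hY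
    field_simp
    ring
  constructor
  · intro w hw
    obtain ⟨g', hg', _⟩ := key w hw
    exact hg'.differentiableAt.differentiableWithinAt
  · intro w hw
    obtain ⟨g', _, h⟩ := key w hw
    exact h
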